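/- (Lemma 1, binary consistency.) Fix π ∈ (0,1). For every η ∈ (0,1) the conditional risk C_η is strictly convex and attains a unique minimizer f*(η) ∈ ℝ. Then the following are equivalent: (i) for every η ∈ (0,1), f*(η) > 0 if and only if η > π; (ii) (ω₊/ω₋)·σ(γ·δ₊)/σ(γ·δ₋) = (1 − π)/π, where σ(z) = 1/(1 + exp(−z)) is the standard sigmoid. -/

import Mathlib

noncomputable def sigm (x : ℝ) : ℝ := Real.exp x / (1 + Real.exp x)

lemma one_add_exp_pos (x : ℝ) : 0 < 1 + Real.exp x := by positivity

lemma sigm_pos (x : ℝ) : 0 < sigm x := div_pos (Real.exp_pos x) (one_add_exp_pos x)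

lemma sigm_lt_one (x : ℝ) : sigm x < 1 := by
  rw [sigm, div_lt_one (one_add_exp_pos x)]; linarith [Real.exp_pos x]

lemma sigm_strictMono : StrictMono sigm := by
  intro x y hxy
  have hx := Real.exp_pos x; have hy := Real.exp_pos y
  have h : Real.exp x < Real.exp y := Real.exp_lt_exp.mpr hxy
  rw [sigm, sigm, div_lt_div_iff₀ (one_add_exp_pos x) (one_add_exp_pos y)]
  nlinarith

lemma continuous_sigm : Continuous sigm :=
  (Real.continuous_exp).div (continuous_const.add Real.continuous_exp)
    (fun x => ne_of_gt (one_add_exp_pos x))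

lemma sigm_eq_one_div (x : ℝ) : sigm x = 1 / (1 + Real.exp (-x)) := by
  have h1 : (0:ℝ) < 1 + Real.exp (-x) := one_add_exp_pos _
  have hx := Real.exp_pos x
  rw [sigm, div_eq_div_iff (ne_of_gt (one_add_exp_pos x)) (ne_of_gt h1)]
  have hne := Real.exp_neg x
  rw [hne]
  field_simp
  ring

lemma sigm_tendsto_atTop : Filter.Tendsto sigm Filter.atTop (nhds 1) := by
  have h : sigm = fun x => 1 / (1 + Real.exp (-x)) := funext sigm_eq_one_div
  rw [h]
  have : Filter.Tendsto (fun x : ℝ => Real.exp (-x)) Filter.atTop (nhds 0) := by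
    exact Real.tendsto_exp_atBot.comp Filter.tendsto_neg_atTop_atBot
  have h2 : Filter.Tendsto (fun x : ℝ => 1 + Real.exp (-x)) Filter.atTop (nhds 1) := by
    simpa using this.const_add 1
  have := h2.inv₀ (by norm_num)
  simpa using this

lemma sigm_tendsto_atBot : Filter.Tendsto sigm Filter.atBot (nhds 0) := by
  have h1 : Filter.Tendsto (fun x : ℝ => Real.exp x) Filter.atBot (nhds 0) := Real.tendsto_exp_atBot
  have h2 : Filter.Tendsto (fun x : ℝ => 1 + Real.exp x) Filter.atBot (nhds 1) := by simpa using h1.const_add 1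
  have := h1.div h2 (by norm_num)
  rw [zero_div] at this
  exact this

lemma hasDerivAt_logexp (c d f : ℝ) :
    HasDerivAt (fun x : ℝ => Real.log (1 + Real.exp (c + d * x)))
      (d * sigm (c + d * f)) f := by
  have h1 : HasDerivAt (fun x : ℝ => c + d * x) d f := by
    simpa using ((hasDerivAt_id f).const_mul d).const_add c
  have h2 := h1.exp
  have h3 : HasDerivAt (fun x : ℝ => 1 + Real.exp (c + d * x))
      (Real.exp (c + d * f) * d) f := h2.const_add 1
  have h4 := h3.log (ne_of_gt (one_add_exp_pos _))
  convert h4 using 1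
  rw [sigm]; ring

lemma hasDerivAt_Cfun (ωp ωm γ δp δm η f : ℝ) (hγ : γ ≠ 0) :
    HasDerivAt (fun x => η * ((ωp / γ) * Real.log (1 + Real.exp (γ * δp - γ * x))) +
      (1 - η) * ((ωm / γ) * Real.log (1 + Real.exp (γ * δm + γ * x))))
      ((1 - η) * ωm * sigm (γ * δm + γ * f) - η * ωp * sigm (γ * δp - γ * f)) f := by
  have h1 := (hasDerivAt_logexp (γ * δp) (-γ) f).const_mul (η * (ωp / γ))
  have h2 := (hasDerivAt_logexp (γ * δm) γ f).const_mul ((1 - η) * (ωm / γ))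
  have h := h1.add h2
  have harg : ∀ x : ℝ, γ * δp + -γ * x = γ * δp - γ * x := fun x => by ring
  refine (h.congr_of_eventuallyEq (Filter.Eventually.of_forall fun x => ?_)).congr_deriv ?_
  · simp only [Pi.add_apply, harg]
    ring
  · rw [harg]
    field_simp
    ring

/-- Lemma 1 (binary consistency): for each `η ∈ (0,1)` the conditional risk of the binary
pairwise margin loss is strictly convex with a unique minimiser, and the minimiser is
positive exactly when `η > π` iff `(ω₊/ω₋)·σ(γδ₊)/σ(γδ₋) = (1-π)/π`. -/
theorem binary_pairwise_margin_consistency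
    (ωp ωm γ : ℝ) (hωp : 0 < ωp) (hωm : 0 < ωm) (hγ : 0 < γ)
    (δp δm : ℝ) (π : ℝ) (hπ : π ∈ Set.Ioo (0 : ℝ) 1)
    (C : ℝ → ℝ → ℝ)
    (hC : ∀ η f : ℝ, C η f =
      η * ((ωp / γ) * Real.log (1 + Real.exp (γ * δp - γ * f))) +
      (1 - η) * ((ωm / γ) * Real.log (1 + Real.exp (γ * δm + γ * f)))) :
    (∀ η ∈ Set.Ioo (0 : ℝ) 1,
      StrictConvexOn ℝ Set.univ (C η) ∧ ∃! f : ℝ, ∀ g : ℝ, C η f ≤ C η g) ∧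
    ((∀ η ∈ Set.Ioo (0 : ℝ) 1, ∀ f : ℝ, (∀ g : ℝ, C η f ≤ C η g) → (0 < f ↔ π < η)) ↔
      (ωp / ωm) * ((1 / (1 + Real.exp (-(γ * δp)))) / (1 / (1 + Real.exp (-(γ * δm))))) =
        (1 - π) / π) := by
  obtain ⟨hπp, hπ1⟩ := hπ
  set D : ℝ → ℝ → ℝ :=
    fun η f => (1 - η) * ωm * sigm (γ * δm + γ * f) - η * ωp * sigm (γ * δp - γ * f) with hDdef
  have hCfun : ∀ η : ℝ, C η = fun f => η * ((ωp / γ) * Real.log (1 + Real.exp (γ * δp - γ * f))) +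
      (1 - η) * ((ωm / γ) * Real.log (1 + Real.exp (γ * δm + γ * f))) := fun η => funext (hC η)
  have hderiv : ∀ η f : ℝ, HasDerivAt (C η) (D η f) f := by
    intro η f
    rw [hCfun η]
    exact hasDerivAt_Cfun ωp ωm γ δp δm η f (ne_of_gt hγ)
  have hDmono : ∀ η ∈ Set.Ioo (0 : ℝ) 1, StrictMono (D η) := by
    rintro η ⟨hη0, hη1⟩ x y hxy
    have h1 : sigm (γ * δm + γ * x) < sigm (γ * δm + γ * y) := sigm_strictMono (by nlinarith)
    have h2 : sigm (γ * δp - γ * y) < sigm (γ * δp - γ * x) := sigm_strictMono (by nlinarith)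
    have hm : 0 < (1 - η) * ωm := by nlinarith
    have hp : 0 < η * ωp := by nlinarith
    simp only [hDdef]
    nlinarith
  have hCdiff : ∀ η : ℝ, Differentiable ℝ (C η) := fun η f => (hderiv η f).differentiableAt
  have hCcont : ∀ η : ℝ, Continuous (C η) := fun η => (hCdiff η).continuous
  have hderivEq : ∀ η : ℝ, deriv (C η) = D η := fun η => funext fun f => (hderiv η f).deriv
  have hconv : ∀ η ∈ Set.Ioo (0 : ℝ) 1, StrictConvexOn ℝ Set.univ (C η) := by
    intro η hη
    exact StrictMono.strictConvexOn_univ_of_deriv (hCcont η) (hderivEq η ▸ hDmono η hη)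
  have hDcont : ∀ η : ℝ, Continuous (D η) := by
    intro η
    exact (continuous_const.mul (continuous_sigm.comp
        (continuous_const.add (continuous_const.mul continuous_id)))).sub
      (continuous_const.mul (continuous_sigm.comp
        (continuous_const.sub (continuous_const.mul continuous_id))))
  -- existence of a root of the derivative
  have hroot : ∀ η ∈ Set.Ioo (0 : ℝ) 1, ∃ r : ℝ, D η r = 0 := by
    rintro η ⟨hη0, hη1⟩
    have tmul : Filter.Tendsto (fun f : ℝ => γ * f) Filter.atTop Filter.atTop :=
      Filter.Tendsto.const_mul_atTop hγ Filter.tendsto_id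
    have tmul' : Filter.Tendsto (fun f : ℝ => γ * f) Filter.atBot Filter.atBot :=
      Filter.Tendsto.const_mul_atBot hγ Filter.tendsto_id
    have t1 : Filter.Tendsto (fun f : ℝ => γ * δm + γ * f) Filter.atTop Filter.atTop :=
      Filter.tendsto_atTop_add_const_left _ _ tmul
    have t1' : Filter.Tendsto (fun f : ℝ => γ * δm + γ * f) Filter.atBot Filter.atBot :=
      Filter.tendsto_atBot_add_const_left _ _ tmul'
    have t2 : Filter.Tendsto (fun f : ℝ => γ * δp - γ * f) Filter.atTop Filter.atBot := by
      have h := Filter.tendsto_atBot_add_const_left Filter.atTop (γ * δp)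
        ((Filter.tendsto_neg_atTop_atBot.comp tmul))
      exact h.congr (fun x => by simp [Function.comp]; ring)
    have t2' : Filter.Tendsto (fun f : ℝ => γ * δp - γ * f) Filter.atBot Filter.atTop := by
      have h := Filter.tendsto_atTop_add_const_left Filter.atBot (γ * δp)
        ((Filter.tendsto_neg_atBot_atTop.comp tmul'))
      exact h.congr (fun x => by simp [Function.comp]; ring)
    have htop : Filter.Tendsto (D η) Filter.atTop (nhds ((1 - η) * ωm)) := by
      have := (((sigm_tendsto_atTop.comp t1).const_mul ((1 - η) * ωm)).sub
        ((sigm_tendsto_atBot.comp t2).const_mul (η * ωp)))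
      simpa [Function.comp, hDdef] using this
    have hbot : Filter.Tendsto (D η) Filter.atBot (nhds (-(η * ωp))) := by
      have := (((sigm_tendsto_atBot.comp t1').const_mul ((1 - η) * ωm)).sub
        ((sigm_tendsto_atTop.comp t2').const_mul (η * ωp)))
      simpa [Function.comp, hDdef] using this
    have hneg : -(η * ωp) < 0 := by nlinarith
    have hpos : (0 : ℝ) < (1 - η) * ωm := by nlinarith
    obtain ⟨x, hx⟩ : ∃ x, D η x < 0 := (hbot.eventually_lt_const hneg).exists
    obtain ⟨y, hy⟩ : ∃ y, (0:ℝ) < D η y := (htop.eventually_const_lt hpos).exists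
    have hxy : x < y := (hDmono η ⟨hη0, hη1⟩).lt_iff_lt.mp (lt_trans hx hy)
    have hsub := intermediate_value_Icc hxy.le (hDcont η).continuousOn
    obtain ⟨r, _, hr⟩ := hsub ⟨hx.le, hy.le⟩
    exact ⟨r, hr⟩
  -- a root of the derivative is a global minimiser
  have hminOf : ∀ η ∈ Set.Ioo (0 : ℝ) 1, ∀ r : ℝ, D η r = 0 → ∀ g : ℝ, C η r ≤ C η g := by
    intro η hη r hr g
    rcases le_or_gt g r with h | h
    · have hant : AntitoneOn (C η) (Set.Iic r) := by
        apply antitoneOn_of_deriv_nonpos (convex_Iic r) (hCcont η).continuousOn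
          ((hCdiff η).differentiableOn)
        intro x hx
        rw [interior_Iic] at hx
        rw [hderivEq η]
        have := hDmono η hη hx
        rw [hr] at this
        exact this.le
      exact hant h (le_refl r) h
    · have hmon : MonotoneOn (C η) (Set.Ici r) := by
        apply monotoneOn_of_deriv_nonneg (convex_Ici r) (hCcont η).continuousOn
          ((hCdiff η).differentiableOn)
        intro x hx
        rw [interior_Ici] at hx
        rw [hderivEq η]
        have := hDmono η hη hx
        rw [hr] at this
        exact this.le
      exact hmon (le_refl r) h.le h.le
  have hexun : ∀ η ∈ Set.Ioo (0 : ℝ) 1, ∃! f : ℝ, ∀ g : ℝ, C η f ≤ C η g := by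
    intro η hη
    obtain ⟨r, hr⟩ := hroot η hη
    refine ⟨r, hminOf η hη r hr, ?_⟩
    intro f' hf'
    by_contra hne
    have hlt := (hconv η hη).2 (Set.mem_univ f') (Set.mem_univ r) hne
      (by norm_num : (0:ℝ) < 1/2) (by norm_num : (0:ℝ) < 1/2) (by norm_num)
    simp only [smul_eq_mul] at hlt
    have h1 := hf' (1/2 * f' + 1/2 * r)
    have h2 := hminOf η hη r hr (1/2 * f' + 1/2 * r)
    linarith
  -- the threshold
  have hP : 0 < ωp * sigm (γ * δp) := mul_pos hωp (sigm_pos _)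
  have hM : 0 < ωm * sigm (γ * δm) := mul_pos hωm (sigm_pos _)
  set P := ωp * sigm (γ * δp) with hPdef
  set M := ωm * sigm (γ * δm) with hMdef
  set π₀ := M / (P + M) with hπ₀def
  have hPM : 0 < P + M := by linarith
  have hπ₀0 : 0 < π₀ := div_pos hM hPM
  have hπ₀1 : π₀ < 1 := by rw [hπ₀def, div_lt_one hPM]; linarith
  have key : ∀ η ∈ Set.Ioo (0 : ℝ) 1, ∀ f : ℝ, (∀ g : ℝ, C η f ≤ C η g) → (0 < f ↔ π₀ < η) := by
    intro η hη f hf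
    have hloc : IsLocalMin (C η) f := Filter.Eventually.of_forall hf
    have hDf0 : D η f = 0 := hloc.hasDerivAt_eq_zero (hderiv η f)
    have h0f : (0 < f) ↔ D η 0 < D η f := ((hDmono η hη).lt_iff_lt).symm
    rw [h0f, hDf0]
    have hD0 : D η 0 = (1 - η) * M - η * P := by
      simp only [hDdef, mul_zero, add_zero, sub_zero, hMdef, hPdef]
      ring
    rw [hD0, hπ₀def, div_lt_iff₀ hPM]
    constructor <;> intro h <;> nlinarith
  have hratio : ((ωp / ωm) * ((1 / (1 + Real.exp (-(γ * δp)))) / (1 / (1 + Real.exp (-(γ * δm))))) =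
        (1 - π) / π) ↔ π₀ = π := by
    rw [← sigm_eq_one_div, ← sigm_eq_one_div]
    rw [div_mul_div_comm, ← hPdef, ← hMdef]
    rw [div_eq_div_iff hM.ne' (by linarith : π ≠ 0), hπ₀def, div_eq_iff hPM.ne']
    constructor <;> intro h <;> nlinarith
  refine ⟨fun η hη => ⟨hconv η hη, hexun η hη⟩, ?_⟩
  rw [hratio]
  constructor
  · intro hi
    have hiff : ∀ η ∈ Set.Ioo (0 : ℝ) 1, (π₀ < η ↔ π < η) := by
      intro η hη
      obtain ⟨f, hf, _⟩ := hexun η hη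
      exact ((key η hη f hf).symm.trans (hi η hη f hf))
    by_contra hne
    rcases lt_or_gt_of_ne hne with h | h
    · have hmid : (π₀ + π) / 2 ∈ Set.Ioo (0 : ℝ) 1 := ⟨by linarith, by linarith⟩
      have := (hiff _ hmid).mp (by linarith)
      linarith
    · have hmid : (π₀ + π) / 2 ∈ Set.Ioo (0 : ℝ) 1 := ⟨by linarith, by linarith⟩
      have := (hiff _ hmid).mpr (by linarith)
      linarith
  · intro heq η hη f hf
    rw [key η hη f hf, heq]
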